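/- Let A satisfy the K-condition. Define the coherent-state Leibniz function Υ(B,V) = Σ_x (multinomial weight at x) · G_x(B) · G_x(V), where G_x(v) = (Σ_μ A_{0μ}v_μ)^{N−Σx_i} ∏_i (Σ_μ A_{iμ}v_μ)^{x_i} with v_0 = 1. Then Υ(B,V) = (Σ_μ B_μ D_μ V_μ)^N, where B_0 = V_0 = 1 and D_μ are the diagonal entries of D. -/

import Mathlib

open Finset Matrix

/-- Leibniz function for the Krawtchouk system: the multinomial average of the
product of two coherent-state generating functions equals
`(∑_μ B_μ D_μ V_μ)^N` with `B₀ = V₀ = 1`. -/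
theorem krawtchouk_leibniz_function
    (d N : ℕ) (A : Matrix (Fin (d + 1)) (Fin (d + 1)) ℝ)
    (p Dd : Fin (d + 1) → ℝ)
    (hp : ∀ ℓ, 0 < p ℓ) (hpsum : ∑ ℓ, p ℓ = 1)
    (hD : ∀ ℓ, 0 < Dd ℓ) (hD0 : Dd 0 = 1)
    (hcol : ∀ ℓ, A ℓ 0 = 1)
    (hK : Aᵀ * Matrix.diagonal p * A = Matrix.diagonal Dd)
    (G : (Fin (d + 1) → ℕ) → (Fin (d + 1) → ℝ) → ℝ)
    (hG : ∀ x v, G x v = ∏ ℓ, (∑ μ, A ℓ μ * v μ) ^ x ℓ)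
    (B V : Fin (d + 1) → ℝ) (hB0 : B 0 = 1) (hV0 : V 0 = 1) :
    ∑ x ∈ Finset.Nat.antidiagonalTuple (d + 1) N,
        (Nat.multinomial Finset.univ x : ℝ) * (∏ ℓ, p ℓ ^ x ℓ) *
          G x B * G x V =
      (∑ μ, B μ * Dd μ * V μ) ^ N := by
  have hent : ∀ μ ν, (Matrix.diagonal Dd : Matrix (Fin (d+1)) (Fin (d+1)) ℝ) μ ν
      = ∑ ℓ, A ℓ μ * p ℓ * A ℓ ν := by
    intro μ ν
    rw [← hK]
    simp only [Matrix.mul_apply, Matrix.diagonal_apply, Matrix.transpose_apply,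
      mul_ite, mul_zero, Finset.sum_ite_eq', Finset.mem_univ, if_true]
  have key : ∑ ℓ, p ℓ * (∑ μ, A ℓ μ * B μ) * (∑ μ, A ℓ μ * V μ)
      = ∑ μ, B μ * Dd μ * V μ := by
    have expand : ∀ ℓ, p ℓ * (∑ μ, A ℓ μ * B μ) * (∑ ν, A ℓ ν * V ν)
        = ∑ μ, ∑ ν, B μ * V ν * (A ℓ μ * p ℓ * A ℓ ν) := by
      intro ℓ
      rw [mul_assoc, Finset.sum_mul_sum, Finset.mul_sum]
      refine Finset.sum_congr rfl fun μ _ => ?_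
      rw [Finset.mul_sum]
      exact Finset.sum_congr rfl fun ν _ => by ring
    calc ∑ ℓ, p ℓ * (∑ μ, A ℓ μ * B μ) * (∑ μ, A ℓ μ * V μ)
        = ∑ ℓ, ∑ μ, ∑ ν, B μ * V ν * (A ℓ μ * p ℓ * A ℓ ν) :=
          Finset.sum_congr rfl fun ℓ _ => expand ℓ
      _ = ∑ μ, ∑ ν, B μ * V ν * ∑ ℓ, (A ℓ μ * p ℓ * A ℓ ν) := by
          rw [Finset.sum_comm]
          refine Finset.sum_congr rfl fun μ _ => ?_
          rw [Finset.sum_comm]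
          refine Finset.sum_congr rfl fun ν _ => ?_
          rw [Finset.mul_sum]
      _ = ∑ μ, ∑ ν, B μ * V ν *
            (Matrix.diagonal Dd : Matrix (Fin (d+1)) (Fin (d+1)) ℝ) μ ν := by
          simp_rw [hent]
      _ = ∑ μ, B μ * Dd μ * V μ := by
          refine Finset.sum_congr rfl fun μ _ => ?_
          rw [Finset.sum_eq_single μ]
          · rw [Matrix.diagonal_apply_eq]; ring
          · intro ν _ hν; rw [Matrix.diagonal_apply_ne' _ hν, mul_zero]
          · simp
  rw [← key, ← Finset.piAntidiag_univ_fin_eq_antidiagonalTuple N (d+1),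
    Finset.sum_pow_eq_sum_piAntidiag]
  apply Finset.sum_congr rfl
  intro x hx
  rw [hG, hG]
  simp only [mul_pow, Finset.prod_mul_distrib]
  ring
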